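/- Let α ∈ R and σ ∈ V⁰ with α + σ ∈ R. Then for every n ∈ ℤ, (t̂_α^σ)ⁿ = t̂_α^{nσ}, that is, (ŵ_{α+σ} ŵ_α)ⁿ = ŵ_{α+nσ} ŵ_α. -/

import Mathlib

/-- The reflection `s_α(u) = u - (u, α^∨) α` associated to a vector `α`, where
`α^∨ = 2α/(α,α)` and `B` is the bilinear form. -/
noncomputable def reflMap {V : Type*} [AddCommGroup V] [Module ℝ V] (B : V →ₗ[ℝ] V →ₗ[ℝ] ℝ)
    (α : V) : V → V :=
  fun u => u - ((2 * B u α) / B α α) • α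

/-- The defining relations of the presented group `Ŵ`: (I) `ŵ_α² = 1` and
(II) `ŵ_α ŵ_β ŵ_α = ŵ_{s_α(β)}` for `α, β ∈ R`. -/
def eawRels {V : Type*} [AddCommGroup V] [Module ℝ V] (B : V →ₗ[ℝ] V →ₗ[ℝ] ℝ)
    (R : Set V) : Set (FreeGroup R) :=
  {r | ∃ α : R, r = FreeGroup.of α * FreeGroup.of α} ∪
  {r | ∃ α β γ : R, (γ : V) = reflMap B (α : V) (β : V) ∧
        r = FreeGroup.of α * FreeGroup.of β * FreeGroup.of α * (FreeGroup.of γ)⁻¹}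

/-- The group `Ŵ` presented by generators `ŵ_α` (`α ∈ R`) and relations (I), (II). -/
abbrev EAW {V : Type*} [AddCommGroup V] [Module ℝ V] (B : V →ₗ[ℝ] V →ₗ[ℝ] ℝ)
    (R : Set V) :=
  PresentedGroup (eawRels B R)

/-- The generator `ŵ_α` of `Ŵ`. -/
def wgen {V : Type*} [AddCommGroup V] [Module ℝ V] (B : V →ₗ[ℝ] V →ₗ[ℝ] ℝ)
    (R : Set V) (α : V) (hα : α ∈ R) : EAW B R :=
  PresentedGroup.of (⟨α, hα⟩ : R)

/-- The element `t̂_α^σ = ŵ_{α+σ} ŵ_α` of `Ŵ`. -/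
def tgen {V : Type*} [AddCommGroup V] [Module ℝ V] (B : V →ₗ[ℝ] V →ₗ[ℝ] ℝ)
    (R : Set V) (α σ : V) (hα : α ∈ R) (hασ : α + σ ∈ R) : EAW B R :=
  wgen B R (α + σ) hασ * wgen B R α hα

section Aux
variable {V : Type*} [AddCommGroup V] [Module ℝ V] (B : V →ₗ[ℝ] V →ₗ[ℝ] ℝ) (R : Set V)

lemma wgen_congr {x y : V} (hx : x ∈ R) (hy : y ∈ R) (h : x = y) :
    wgen B R x hx = wgen B R y hy := by subst h; rfl

lemma rel_one_mem (r : FreeGroup R) (hr : r ∈ eawRels B R) :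
    (QuotientGroup.mk r : PresentedGroup (eawRels B R)) = 1 := by
  rw [QuotientGroup.eq_one_iff]
  exact Subgroup.subset_normalClosure hr

lemma wgen_sq (x : V) (hx : x ∈ R) : wgen B R x hx * wgen B R x hx = 1 := by
  have h := rel_one_mem B R (FreeGroup.of ⟨x, hx⟩ * FreeGroup.of ⟨x, hx⟩)
    (Or.inl ⟨⟨x, hx⟩, rfl⟩)
  exact h

lemma wgen_rel (a b c : V) (ha : a ∈ R) (hb : b ∈ R) (hc : c ∈ R)
    (h : c = reflMap B a b) :
    wgen B R a ha * wgen B R b hb * wgen B R a ha = wgen B R c hc := by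
  have hmem : (FreeGroup.of ⟨a, ha⟩ * FreeGroup.of ⟨b, hb⟩ * FreeGroup.of ⟨a, ha⟩ *
      (FreeGroup.of ⟨c, hc⟩)⁻¹ : FreeGroup R) ∈ eawRels B R :=
    Or.inr ⟨⟨a, ha⟩, ⟨b, hb⟩, ⟨c, hc⟩, h, rfl⟩
  have h1 := rel_one_mem B R _ hmem
  have h2 : (wgen B R a ha * wgen B R b hb * wgen B R a ha) * (wgen B R c hc)⁻¹ = 1 := by
    exact h1
  exact mul_inv_eq_one.mp h2

lemma wgen_neg (x : V) (hx : x ∈ R) (hnx : -x ∈ R) (hself : reflMap B x x = -x) :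
    wgen B R (-x) hnx = wgen B R x hx := by
  have h := wgen_rel B R x x (-x) hx hx hnx hself.symm
  rw [wgen_sq B R x hx, one_mul] at h
  exact h.symm

lemma abstract_pow {G : Type*} [Group G] (w : ℤ → G)
    (hw2 : ∀ j, w j * w j = 1)
    (hrel : ∀ m k, w m * w k * w m = w (2 * m - k)) :
    ∀ n : ℤ, (w 1 * w 0) ^ n = w n * w 0 := by
  have hcancel : ∀ (j : ℤ) (g : G), w j * (w j * g) = g := fun j g => by
    rw [← mul_assoc, hw2 j, one_mul]
  have hwinv : ∀ j, (w j)⁻¹ = w j := fun j => inv_eq_of_mul_eq_one_right (hw2 j)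
  have hstep : ∀ k : ℤ, w (k + 1) * w k = w 1 * w 0 := by
    intro k
    induction k using Int.induction_on with
    | zero => norm_num
    | succ i ih =>
        have h := hrel (i + 1) i
        rw [show 2 * ((i : ℤ) + 1) - i = i + 1 + 1 by ring] at h
        rw [← h, ← ih]
        simp [mul_assoc, hcancel, hw2]
    | pred i ih =>
        have h := hrel (-i) (-i + 1)
        rw [show 2 * (-(i : ℤ)) - (-i + 1) = -i - 1 by ring] at h
        rw [show (-(i:ℤ) - 1 + 1) = -i by ring, ← h, ← ih]
        rw [show (-(i:ℤ) + 1) = -i + 1 by ring]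
        simp [mul_assoc, hcancel]
  intro n
  induction n using Int.induction_on with
  | zero => rw [zpow_zero, hw2 0]
  | succ i ih =>
      have hc : (w 1 * w 0) ^ (i : ℤ) * (w 1 * w 0) = (w 1 * w 0) * (w 1 * w 0) ^ (i : ℤ) :=
        (((Commute.refl (w 1 * w 0)).zpow_right i).eq).symm
      rw [zpow_add_one, hc, ih, ← hstep i]
      simp [mul_assoc, hcancel]
  | pred i ih =>
      have h1 : (w 1 * w 0) ^ (-(i : ℤ) - 1) = (w 1 * w 0)⁻¹ * (w 1 * w 0) ^ (-(i : ℤ)) := by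
        rw [show (-(i:ℤ) - 1) = (-1) + (-i) by ring, zpow_add, zpow_neg_one]
      have ht : w 1 * w 0 = w (-(i : ℤ)) * w (-(i : ℤ) - 1) := by
        rw [← hstep (-(i : ℤ) - 1), show (-(i:ℤ) - 1 + 1) = -i by ring]
      rw [h1, ih, ht, mul_inv_rev, hwinv, hwinv]
      simp [mul_assoc, hcancel]

end Aux

/-- For `α ∈ R` and `σ` in the radical with `α + σ ∈ R`, we have `α + nσ ∈ R` and
`(t̂_α^σ)ⁿ = t̂_α^{nσ}`, i.e. `(ŵ_{α+σ} ŵ_α)ⁿ = ŵ_{α+nσ} ŵ_α`, for every `n ∈ ℤ`. -/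
theorem tgen_zpow {V : Type*} [AddCommGroup V] [Module ℝ V]
    (B : V →ₗ[ℝ] V →ₗ[ℝ] ℝ) (R : Set V)
    (hsym : ∀ u v : V, B u v = B v u)
    (hpsd : ∀ v : V, 0 ≤ B v v)
    (hnon : ∀ α ∈ R, B α α ≠ 0)
    (hclos : ∀ α ∈ R, ∀ β ∈ R, reflMap B α β ∈ R)
    (α σ : V) (hα : α ∈ R) (hσ : ∀ u : V, B σ u = 0) (hασ : α + σ ∈ R) (n : ℤ) :
    ∃ hn : α + n • σ ∈ R,
      (tgen B R α σ hα hασ) ^ n = wgen B R (α + n • σ) hn * wgen B R α hα := by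
  have hBσ' : ∀ u, B u σ = 0 := fun u => (hsym u σ).trans (hσ u)
  have hBx : ∀ m k : ℤ, B (α + m • σ) (α + k • σ) = B α α := by
    intro m k
    simp [map_add, map_zsmul, LinearMap.add_apply, LinearMap.smul_apply, hσ, hBσ']
  have hBne : ∀ m : ℤ, B (α + m • σ) (α + m • σ) ≠ 0 := fun m => by
    rw [hBx]; exact hnon α hα
  have hrefl : ∀ m k : ℤ, reflMap B (α + m • σ) (α + k • σ) = -(α + (2 * m - k) • σ) := by
    intro m k
    unfold reflMap
    rw [hBx k m, hBx m m, mul_div_assoc, div_self (hnon α hα), mul_one,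
        ← Int.cast_smul_eq_zsmul ℝ m σ, ← Int.cast_smul_eq_zsmul ℝ k σ,
        ← Int.cast_smul_eq_zsmul ℝ (2 * m - k) σ]
    push_cast
    module
  have hreflself : ∀ x : V, B x x ≠ 0 → reflMap B x x = -x := by
    intro x hx
    unfold reflMap
    rw [mul_div_assoc, div_self hx, mul_one, two_smul]
    abel
  have hnegmem : ∀ x : V, B x x ≠ 0 → x ∈ R → -x ∈ R := fun x hx hm => by
    have h := hclos x hm x hm
    rwa [hreflself x hx] at h
  have hnegmem' : ∀ x : V, B x x ≠ 0 → -x ∈ R → x ∈ R := fun x hx hm => by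
    have hx' : B (-x) (-x) ≠ 0 := by simpa using hx
    have h := hnegmem (-x) hx' hm
    rwa [neg_neg] at h
  have hstep : ∀ m k : ℤ, α + m • σ ∈ R → α + k • σ ∈ R → α + (2 * m - k) • σ ∈ R := by
    intro m k hm hk
    have h1 := hclos _ hm _ hk
    rw [hrefl m k] at h1
    exact hnegmem' _ (hBne (2 * m - k)) h1
  have h0 : α + (0 : ℤ) • σ ∈ R := by simpa using hα
  have h1 : α + (1 : ℤ) • σ ∈ R := by simpa using hασ
  have hmem : ∀ j : ℤ, α + j • σ ∈ R := by
    have key : ∀ j : ℤ, (α + j • σ ∈ R) ∧ (α + (j + 1) • σ ∈ R) := by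
      intro j
      induction j using Int.induction_on with
      | zero => exact ⟨h0, by simpa using h1⟩
      | succ i ih =>
          refine ⟨ih.2, ?_⟩
          have h := hstep (i + 1) i ih.2 ih.1
          rwa [show 2 * ((i : ℤ) + 1) - i = i + 1 + 1 by ring] at h
      | pred i ih =>
          refine ⟨?_, by rw [show (-(i : ℤ) - 1 + 1) = -i by ring]; exact ih.1⟩
          have h := hstep (-i) (-i + 1) ih.1 ih.2
          rwa [show 2 * (-(i : ℤ)) - (-i + 1) = -i - 1 by ring] at h
    exact fun j => (key j).1
  have hw2 : ∀ j : ℤ, wgen B R (α + j • σ) (hmem j) * wgen B R (α + j • σ) (hmem j) = 1 :=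
    fun j => wgen_sq B R _ (hmem j)
  have hrelw : ∀ m k : ℤ, wgen B R (α + m • σ) (hmem m) * wgen B R (α + k • σ) (hmem k) *
      wgen B R (α + m • σ) (hmem m) = wgen B R (α + (2 * m - k) • σ) (hmem (2 * m - k)) := by
    intro m k
    have hneg : -(α + (2 * m - k) • σ) ∈ R := hnegmem _ (hBne _) (hmem _)
    have h2 := wgen_rel B R (α + m • σ) (α + k • σ) (-(α + (2 * m - k) • σ))
      (hmem m) (hmem k) hneg (hrefl m k).symm
    rwa [wgen_neg B R _ (hmem (2 * m - k)) hneg (hreflself _ (hBne _))] at h2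
  have main := abstract_pow (fun j : ℤ => wgen B R (α + j • σ) (hmem j)) hw2 hrelw n
  refine ⟨hmem n, ?_⟩
  have e : tgen B R α σ hα hασ =
      wgen B R (α + (1 : ℤ) • σ) (hmem 1) * wgen B R (α + (0 : ℤ) • σ) (hmem 0) := by
    unfold tgen
    rw [wgen_congr B R hασ (hmem 1) (by rw [one_smul]),
        wgen_congr B R hα (hmem 0) (by simp)]
  calc (tgen B R α σ hα hασ) ^ n
      = (wgen B R (α + (1 : ℤ) • σ) (hmem 1) * wgen B R (α + (0 : ℤ) • σ) (hmem 0)) ^ n := by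
        rw [e]
    _ = wgen B R (α + n • σ) (hmem n) * wgen B R (α + (0 : ℤ) • σ) (hmem 0) := main
    _ = wgen B R (α + n • σ) (hmem n) * wgen B R α hα := by
        rw [wgen_congr B R (hmem 0) hα (by simp)]
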